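/- Let S = ⟨A⟩ be the gluing of affine semigroups S_1 = ⟨A_1⟩ and S_2 = ⟨A_2⟩ with G(S_1) ∩ G(S_2) = dℤ, d ∈ S_1 ∩ S_2 \ {0}. Then every factorization of d in S (with respect to A = A_1 ∪ A_2) is either a factorization of d in S_1 or a factorization of d in S_2; in particular d is a Betti element of S. -/

import Mathlib

open Finset

variable {M : Type*} [AddCommMonoid M] {r : ℕ}

/-- The factorization homomorphism associated to the generating tuple `A`. -/
def phi (A : Fin r → M) (u : Fin r → ℕ) : M := ∑ i, u i • A i

/-- One step of the relation `R`: two factorizations of `a` with nonzero dot product. -/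
def step (A : Fin r → M) (a : M) (u v : Fin r → ℕ) : Prop :=
  phi A u = a ∧ phi A v = a ∧ (∑ i, u i * v i) ≠ 0

/-- The relation `R` on the fiber of `a`: connected by a chain of factorizations with
consecutive nonzero dot products. -/
def Rrel (A : Fin r → M) (a : M) : (Fin r → ℕ) → (Fin r → ℕ) → Prop :=
  Relation.ReflTransGen (step A a)

/-- `a` is a Betti element: its fiber has more than one `R`-class. -/
def IsBetti (A : Fin r → M) (a : M) : Prop :=
  ∃ u v : Fin r → ℕ, phi A u = a ∧ phi A v = a ∧ ¬ Rrel A a u v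

/-- `a` is Betti-minimal: a Betti element minimal with respect to `b ≺ a ↔ a - b ∈ S`. -/
def BettiMinimal (A : Fin r → M) (a : M) : Prop :=
  IsBetti A a ∧ ∀ b : M, IsBetti A b → (∃ c : M, a = b + c) → b = a

/-- `a` has a unique presentation: exactly two factorizations, with disjoint support. -/
def HasUniquePres (A : Fin r → M) (a : M) : Prop :=
  ∃ u v : Fin r → ℕ, u ≠ v ∧ {w : Fin r → ℕ | phi A w = a} = {u, v} ∧
    (∑ i, u i * v i) = 0

/-- The monoid generated by `A` is uniquely presented: every Betti element has exactly two
factorizations, with disjoint support. -/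
def UniquelyPresented (A : Fin r → M) : Prop :=
  ∀ a : M, IsBetti A a → HasUniquePres A a
private lemma exists_fact (A : Fin r → M) {x : M}
    (h : x ∈ AddSubmonoid.closure (Set.range A)) : ∃ u : Fin r → ℕ, ∑ i, u i • A i = x := by
  induction h using AddSubmonoid.closure_induction with
  | mem y hy =>
    obtain ⟨i, rfl⟩ := hy
    exact ⟨Pi.single i 1, by simp [Pi.single_apply, Finset.sum_ite_eq']⟩
  | zero => exact ⟨0, by simp⟩
  | add a b _ _ ha hb =>
    obtain ⟨u, hu⟩ := ha; obtain ⟨v, hv⟩ := hb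
    exact ⟨u + v, by simp [add_smul, Finset.sum_add_distrib, hu, hv]⟩

private lemma coords_zero {n r' : ℕ} (B : Fin r' → Fin n → ℤ) (S : AddSubmonoid (Fin n → ℤ))
    (hS : Set.range B ⊆ S) (hred : ∀ x ∈ S, -x ∈ S → x = 0) (hB : ∀ i, B i ≠ 0)
    (w : Fin r' → ℕ) (h : ∑ i, w i • B i = 0) : ∀ i, w i = 0 := by
  intro i0
  by_contra hw
  have hmem : ∀ i, (w i • B i : Fin n → ℤ) ∈ S :=
    fun i => AddSubmonoid.nsmul_mem S (hS ⟨i, rfl⟩) _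
  have h1 : w i0 • B i0 + ∑ i ∈ univ.erase i0, w i • B i = 0 :=
    (Finset.add_sum_erase univ (fun i => w i • B i) (mem_univ i0)).trans h
  have ht : w i0 • B i0 = 0 :=
    hred _ (hmem i0) (by
      rw [neg_eq_of_add_eq_zero_left ((add_comm _ _).trans h1)]
      exact AddSubmonoid.sum_mem S fun i _ => hmem i)
  apply hB i0
  funext j
  have := congrFun ht j
  simp only [Pi.smul_apply, nsmul_eq_mul, Pi.zero_apply, mul_eq_zero] at this
  rcases this with h' | h'
  · exact absurd (by exact_mod_cast h') hw
  · exact h'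


/-- If `S` is the gluing of `S₁` and `S₂` with `G(S₁) ∩ G(S₂) = dℤ`, every factorization of
`d` in `S` is either a factorization of `d` in `S₁` or in `S₂`; in particular `d` is a Betti
element of `S`. -/
theorem stmt6 {n r₁ r₂ : ℕ} (A₁ : Fin r₁ → (Fin n → ℤ)) (A₂ : Fin r₂ → (Fin n → ℤ))
    (hdisj : Disjoint (Set.range A₁) (Set.range A₂))
    -- the combined family minimally generates S
    (hmin : ∀ i : Fin (r₁ + r₂), ¬ ∃ u : Fin (r₁ + r₂) → ℕ,
      u i = 0 ∧ phi (Fin.append A₁ A₂) u = Fin.append A₁ A₂ i)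
    -- S is reduced
    (hred : ∀ x ∈ AddSubmonoid.closure (Set.range (Fin.append A₁ A₂)),
      -x ∈ AddSubmonoid.closure (Set.range (Fin.append A₁ A₂)) → x = 0)
    (d : Fin n → ℤ) (hd0 : d ≠ 0)
    (hd1 : d ∈ AddSubmonoid.closure (Set.range A₁))
    (hd2 : d ∈ AddSubmonoid.closure (Set.range A₂))
    (hglue : AddSubgroup.closure (Set.range A₁) ⊓ AddSubgroup.closure (Set.range A₂)
      = AddSubgroup.zmultiples d) :
    (∀ w : Fin (r₁ + r₂) → ℕ, phi (Fin.append A₁ A₂) w = d →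
      (∀ j : Fin r₂, w (Fin.natAdd r₁ j) = 0) ∨ (∀ i : Fin r₁, w (Fin.castAdd r₂ i) = 0)) ∧
    IsBetti (Fin.append A₁ A₂) d := by
  set A := Fin.append A₁ A₂ with hA
  set S := AddSubmonoid.closure (Set.range A) with hS
  have hA1 : ∀ i, A₁ i = A (Fin.castAdd r₂ i) := fun i => (Fin.append_left _ _ i).symm
  have hA2 : ∀ j, A₂ j = A (Fin.natAdd r₁ j) := fun j => (Fin.append_right _ _ j).symm
  have hr1 : Set.range A₁ ⊆ S := by
    rintro _ ⟨i, rfl⟩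
    exact AddSubmonoid.subset_closure ⟨Fin.castAdd r₂ i, (hA1 i).symm⟩
  have hr2 : Set.range A₂ ⊆ S := by
    rintro _ ⟨j, rfl⟩
    exact AddSubmonoid.subset_closure ⟨Fin.natAdd r₁ j, (hA2 j).symm⟩
  have hne : ∀ i : Fin (r₁ + r₂), A i ≠ 0 := by
    intro i h0
    exact hmin i ⟨0, rfl, by simp [phi, h0]⟩
  have hdS : d ∈ S := AddSubmonoid.closure_mono (by rintro _ ⟨i, rfl⟩; exact ⟨_, (hA1 i).symm⟩) hd1
  obtain ⟨u₁, hu₁⟩ := exists_fact A₁ hd1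
  obtain ⟨u₂, hu₂⟩ := exists_fact A₂ hd2
  have hdG2 : d ∈ AddSubgroup.closure (Set.range A₂) := by
    rw [← hu₂]
    exact AddSubgroup.sum_mem _ fun j _ =>
      AddSubgroup.nsmul_mem _ (AddSubgroup.subset_closure (k := Set.range A₂) ⟨j, rfl⟩) _
  have part1 : ∀ w : Fin (r₁ + r₂) → ℕ, phi A w = d →
      (∀ j : Fin r₂, w (Fin.natAdd r₁ j) = 0) ∨ (∀ i : Fin r₁, w (Fin.castAdd r₂ i) = 0) := by
    intro w hw
    set x : Fin n → ℤ := ∑ i : Fin r₁, w (Fin.castAdd r₂ i) • A₁ i with hx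
    set y : Fin n → ℤ := ∑ j : Fin r₂, w (Fin.natAdd r₁ j) • A₂ j with hy
    have hxy : x + y = d := by
      rw [← hw]
      simp only [phi, hA, Fin.sum_univ_add, Fin.append_left, Fin.append_right]
      rfl
    have hxG1 : x ∈ AddSubgroup.closure (Set.range A₁) :=
      AddSubgroup.sum_mem _ fun i _ =>
        AddSubgroup.nsmul_mem _ (AddSubgroup.subset_closure (k := Set.range A₁) ⟨i, rfl⟩) _
    have hyG2 : y ∈ AddSubgroup.closure (Set.range A₂) :=
      AddSubgroup.sum_mem _ fun j _ =>
        AddSubgroup.nsmul_mem _ (AddSubgroup.subset_closure (k := Set.range A₂) ⟨j, rfl⟩) _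
    have hxG2 : x ∈ AddSubgroup.closure (Set.range A₂) := by
      have : x = d - y := by rw [← hxy]; abel
      rw [this]; exact sub_mem hdG2 hyG2
    have hxz : x ∈ AddSubgroup.zmultiples d := by
      rw [← hglue]; exact AddSubgroup.mem_inf.2 ⟨hxG1, hxG2⟩
    obtain ⟨k, hk⟩ := AddSubgroup.mem_zmultiples_iff.1 hxz
    have hxS : x ∈ S := AddSubmonoid.sum_mem S fun i _ =>
      AddSubmonoid.nsmul_mem S (hr1 ⟨i, rfl⟩) _
    have hyS : y ∈ S := AddSubmonoid.sum_mem S fun j _ =>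
      AddSubmonoid.nsmul_mem S (hr2 ⟨j, rfl⟩) _
    rcases le_or_gt k 0 with hk0 | hk0
    · -- x = 0
      have hnx : -x ∈ S := by
        have h' : -x = (-k).toNat • d := by
          calc -x = (-k) • d := by rw [← hk, neg_zsmul]
            _ = (-k).toNat • d := by
                rw [← natCast_zsmul, Int.toNat_of_nonneg (by omega : (0:ℤ) ≤ -k)]
        rw [h']; exact AddSubmonoid.nsmul_mem S hdS _
      have hx0 : x = 0 := hred x hxS hnx
      right
      exact coords_zero A₁ S hr1 hred (fun i => by rw [hA1 i]; exact hne _)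
        (fun i => w (Fin.castAdd r₂ i)) hx0
    · -- y = 0
      have hny : -y ∈ S := by
        have h' : -y = (k - 1).toNat • d := by
          have hyd : y = d - x := by rw [← hxy]; abel
          calc -y = (k - 1) • d := by rw [hyd, ← hk, sub_zsmul, one_zsmul]; abel
            _ = (k - 1).toNat • d := by
                rw [← natCast_zsmul, Int.toNat_of_nonneg (by omega : (0:ℤ) ≤ k - 1)]
        rw [h']; exact AddSubmonoid.nsmul_mem S hdS _
      have hy0 : y = 0 := hred y hyS hny
      left
      exact coords_zero A₂ S hr2 hred (fun j => by rw [hA2 j]; exact hne _)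
        (fun j => w (Fin.natAdd r₁ j)) hy0
  refine ⟨part1, Fin.append u₁ 0, Fin.append 0 u₂, ?_, ?_, ?_⟩
  · simp only [phi, hA, Fin.sum_univ_add, Fin.append_left, Fin.append_right, Pi.zero_apply,
      zero_smul, Finset.sum_const_zero, add_zero]
    exact hu₁
  · simp only [phi, hA, Fin.sum_univ_add, Fin.append_left, Fin.append_right, Pi.zero_apply,
      zero_smul, Finset.sum_const_zero, zero_add]
    exact hu₂
  · intro hR
    have key : ∀ z, Rrel A d (Fin.append u₁ 0) z → ∀ j, z (Fin.natAdd r₁ j) = 0 := by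
      intro z hz
      induction hz with
      | refl => intro j; simp [Fin.append_right]
      | tail _ hbc ih =>
        obtain ⟨hb, hc, hdot⟩ := hbc
        rcases part1 _ hc with h2 | h1
        · exact h2
        · exact absurd (by
            rw [Fin.sum_univ_add,
              Finset.sum_eq_zero (fun i _ => by rw [h1 i, mul_zero]),
              Finset.sum_eq_zero (fun j _ => by rw [ih j, zero_mul]), add_zero]) hdot
    have hu₂0 : u₂ = 0 := by
      funext j
      simpa [Fin.append_right] using key _ hR j
    rw [hu₂0] at hu₂
    simp at hu₂
    exact hd0 hu₂.symm
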